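/- Let a ∈ ℂ, let n ≥ 2 and k ≥ 1 be integers, let p₁,…,p_k be non-vanishing rational functions, let α₁,…,α_k be non-constant polynomials with deg(α_i − α_j) ≥ 1 for all 1 ≤ i ≠ j ≤ k, and let P_d(z,f) be a differential polynomial in f with rational coefficients. Then no rational function f satisfies f(z)ⁿ + a·f(z)^{n−2}·f′(z) + P_d(z,f) = Σ_{i=1}^{k} p_i(z)·exp(α_i(z)) for all z outside the finitely many poles involved; i.e., every meromorphic solution of this equation is transcendental. -/

import Mathlib

open Complex Polynomial Finset

/-- `q : ℂ → ℂ` is a rational function: it agrees with a quotient of two complex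
polynomials (with non-zero denominator) away from the zeros of the denominator. -/
def IsRat (q : ℂ → ℂ) : Prop :=
  ∃ A B : Polynomial ℂ, B ≠ 0 ∧ ∀ z : ℂ, B.eval z ≠ 0 → q z = A.eval z / B.eval z

/-- `q : ℂ → ℂ` is a non-vanishing (i.e. not identically zero) rational function. -/
def IsNZRat (q : ℂ → ℂ) : Prop :=
  ∃ A B : Polynomial ℂ, A ≠ 0 ∧ B ≠ 0 ∧ ∀ z : ℂ, B.eval z ≠ 0 → q z = A.eval z / B.eval z

/-- Two functions agree for every `z` outside some finite (exceptional/pole) set. -/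
def EqOffFinite (g h : ℂ → ℂ) : Prop :=
  ∃ S : Set ℂ, S.Finite ∧ ∀ z ∉ S, g z = h z

/-- `f` is meromorphic on `ℂ` with finitely many poles: it is analytic away from a finite
set `S`, and at each point of `S` it is meromorphic (a pole or removable singularity). -/
def MeroFinPoles (f : ℂ → ℂ) : Prop :=
  ∃ S : Finset ℂ,
    (∀ z ∉ S, AnalyticAt ℂ f z) ∧
    ∀ z ∈ S, ∃ n : ℕ, AnalyticAt ℂ (fun w => (w - z) ^ n * f w) z

/-- `P : ℂ → ℂ` is (the value at `f` of) a differential polynomial in `f` of degree at most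
`d` with rational coefficients:
`P(z) = ∑ _{λ ∈ Λ} a_λ(z) ∏ _{i=0}^{m} (f^{(i)}(z))^{λ_i}` with `∑ λ_i ≤ d`,
the identity holding off a finite set (the poles of the coefficients). -/
def IsDiffPolyAt (d : ℕ) (f P : ℂ → ℂ) : Prop :=
  ∃ (m : ℕ) (L : Finset (Fin (m + 1) → ℕ)) (a : (Fin (m + 1) → ℕ) → ℂ → ℂ),
    (∀ lam ∈ L, IsRat (a lam)) ∧
    (∀ lam ∈ L, (∑ i, lam i) ≤ d) ∧
    ∃ S : Set ℂ, S.Finite ∧ ∀ z ∉ S,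
      P z = ∑ lam ∈ L, a lam z * ∏ i : Fin (m + 1), (iteratedDeriv i.val f z) ^ lam i

/-- `Q` is a differential-polynomial operator of degree at most `d` with rational
coefficients, acting on an arbitrary function `f`. -/
def IsDiffPolyOp (d : ℕ) (Q : (ℂ → ℂ) → ℂ → ℂ) : Prop :=
  ∃ (m : ℕ) (L : Finset (Fin (m + 1) → ℕ)) (a : (Fin (m + 1) → ℕ) → ℂ → ℂ),
    (∀ lam ∈ L, IsRat (a lam)) ∧
    (∀ lam ∈ L, (∑ i, lam i) ≤ d) ∧
    ∃ S : Set ℂ, S.Finite ∧ ∀ (f : ℂ → ℂ), ∀ z ∉ S,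
      Q f z = ∑ lam ∈ L, a lam z * ∏ i : Fin (m + 1), (iteratedDeriv i.val f z) ^ lam i


lemma aux_hasDerivAt_pes {k : ℕ} (q α : Fin k → Polynomial ℂ) (z : ℂ) :
    HasDerivAt (fun z => ∑ i, (q i).eval z * Complex.exp ((α i).eval z))
      (∑ i, ((q i).derivative + (α i).derivative * q i).eval z *
        Complex.exp ((α i).eval z)) z := by
  apply HasDerivAt.fun_sum
  intro i _
  have h1 : HasDerivAt (fun z => (q i).eval z) ((q i).derivative.eval z) z :=
    (q i).hasDerivAt z
  have h2 : HasDerivAt (fun z : ℂ => Complex.exp ((α i).eval z))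
      (Complex.exp ((α i).eval z) * (α i).derivative.eval z) z :=
    ((α i).hasDerivAt z).cexp
  have := h1.fun_mul h2
  refine this.congr_deriv ?_
  simp only [Polynomial.eval_add, Polynomial.eval_mul]
  ring

lemma aux_pes_step {k : ℕ} (q α : Fin k → Polynomial ℂ) (β : Polynomial ℂ)
    (h : ∀ z, ∑ i, (q i).eval z * Complex.exp ((α i).eval z) = 0) :
    ∀ z, ∑ i, ((q i).derivative + ((α i).derivative - β) * (q i)).eval z *
        Complex.exp ((α i).eval z) = 0 := by
  intro z
  have hF : (fun z => ∑ i, (q i).eval z * Complex.exp ((α i).eval z))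
      = fun _ => (0 : ℂ) := funext h
  have hd := aux_hasDerivAt_pes q α z
  rw [hF] at hd
  have h0 : (∑ i, ((q i).derivative + (α i).derivative * q i).eval z *
      Complex.exp ((α i).eval z)) = 0 := hd.unique (hasDerivAt_const z 0)
  calc ∑ i, ((q i).derivative + ((α i).derivative - β) * q i).eval z *
        Complex.exp ((α i).eval z)
      = (∑ i, ((q i).derivative + (α i).derivative * q i).eval z *
          Complex.exp ((α i).eval z))
        - β.eval z * ∑ i, (q i).eval z * Complex.exp ((α i).eval z) := by
        rw [Finset.mul_sum, ← Finset.sum_sub_distrib]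
        refine Finset.sum_congr rfl fun i _ => ?_
        simp only [Polynomial.eval_add, Polynomial.eval_mul, Polynomial.eval_sub]
        ring
    _ = 0 := by rw [h0, h z]; ring

lemma aux_gop_ne_zero {c p : Polynomial ℂ} (hc : c ≠ 0) (hp : p ≠ 0) :
    p.derivative + c * p ≠ 0 := by
  intro h
  have h1 : (p.derivative + c * p).coeff (c.natDegree + p.natDegree)
      = c.leadingCoeff * p.leadingCoeff := by
    rw [Polynomial.coeff_add, Polynomial.coeff_mul_degree_add_degree]
    have h2 : p.derivative.coeff (c.natDegree + p.natDegree) = 0 := by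
      rw [Polynomial.coeff_derivative]
      have : p.coeff (c.natDegree + p.natDegree + 1) = 0 :=
        Polynomial.coeff_eq_zero_of_natDegree_lt (by omega)
      simp [this]
    rw [h2, zero_add]
  rw [h] at h1
  simp only [Polynomial.coeff_zero] at h1
  exact mul_ne_zero (Polynomial.leadingCoeff_ne_zero.mpr hc)
    (Polynomial.leadingCoeff_ne_zero.mpr hp) h1.symm

lemma aux_gop_iter_ne_zero {c : Polynomial ℂ} (hc : c ≠ 0) (N : ℕ) :
    ∀ {p : Polynomial ℂ}, p ≠ 0 →
      (fun p : Polynomial ℂ => p.derivative + c * p)^[N] p ≠ 0 := by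
  induction N with
  | zero => intro p hp; simpa using hp
  | succ N ih =>
    intro p hp
    rw [Function.iterate_succ_apply]
    exact ih (aux_gop_ne_zero hc hp)

lemma aux_expPolyIndep : ∀ (k : ℕ) (q α : Fin k → Polynomial ℂ),
    (∀ i j, i ≠ j → 0 < (α i - α j).natDegree) →
    (∀ z, ∑ i, (q i).eval z * Complex.exp ((α i).eval z) = 0) →
    ∀ i, q i = 0 := by
  intro k
  induction k with
  | zero => intro q α _ _ i; exact i.elim0
  | succ m ih =>
    intro q α hαd h
    set β := (α (Fin.last m)).derivative with hβ
    set T : (Fin (m + 1) → Polynomial ℂ) → (Fin (m + 1) → Polynomial ℂ) :=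
      fun r i => (r i).derivative + ((α i).derivative - β) * r i with hT
    set N := (q (Fin.last m)).natDegree + 1 with hN
    have hcomp : ∀ (M : ℕ) (r : Fin (m + 1) → Polynomial ℂ) (i : Fin (m + 1)),
        (T^[M] r) i
          = (fun p : Polynomial ℂ =>
              p.derivative + ((α i).derivative - β) * p)^[M] (r i) := by
      intro M
      induction M with
      | zero => intro r i; simp
      | succ M ihM =>
        intro r i
        rw [Function.iterate_succ_apply, Function.iterate_succ_apply, ihM]
    have hiter : ∀ z, ∑ i, ((T^[N] q) i).eval z * Complex.exp ((α i).eval z) = 0 := by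
      have : ∀ (M : ℕ) (r : Fin (m + 1) → Polynomial ℂ),
          (∀ z, ∑ i, (r i).eval z * Complex.exp ((α i).eval z) = 0) →
          ∀ z, ∑ i, ((T^[M] r) i).eval z * Complex.exp ((α i).eval z) = 0 := by
        intro M
        induction M with
        | zero => intro r hr; simpa using hr
        | succ M ihM =>
          intro r hr
          rw [Function.iterate_succ_apply]
          exact ihM (T r) (aux_pes_step r α β hr)
      exact this N q h
    set r := T^[N] q with hr
    have hlast : r (Fin.last m) = 0 := by
      rw [hr, hcomp N q (Fin.last m)]
      have hz : (α (Fin.last m)).derivative - β = 0 := by rw [hβ, sub_self]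
      rw [hz]
      have hfun : (fun p : Polynomial ℂ => p.derivative + 0 * p)
          = fun p : Polynomial ℂ => Polynomial.derivative p := by
        funext p; rw [zero_mul, add_zero]
      rw [hfun]
      exact Polynomial.iterate_derivative_eq_zero (by omega)
    have hrestrict : ∀ z, ∑ i : Fin m, (r (Fin.castSucc i)).eval z *
        Complex.exp ((α (Fin.castSucc i)).eval z) = 0 := by
      intro z
      have := hiter z
      rw [Fin.sum_univ_castSucc] at this
      rw [hlast] at this
      simpa using this
    have hres0 : ∀ i : Fin m, r (Fin.castSucc i) = 0 := by
      refine ih (fun i => r (Fin.castSucc i)) (fun i => α (Fin.castSucc i)) ?_ hrestrict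
      intro i j hij
      exact hαd _ _ (fun hc => hij (Fin.castSucc_injective m hc))
    have hrzero : ∀ i, r i = 0 := by
      intro i
      rcases eq_or_ne i (Fin.last m) with h' | h'
      · rw [h']; exact hlast
      · obtain ⟨j, rfl⟩ := Fin.exists_castSucc_eq.mpr h'
        exact hres0 j
    have hqzero : ∀ i, i ≠ Fin.last m → q i = 0 := by
      intro i hi
      by_contra hq
      have hc : (α i).derivative - β ≠ 0 := by
        rw [hβ, ← Polynomial.derivative_sub]
        intro hcz
        have := Polynomial.natDegree_eq_zero_of_derivative_eq_zero hcz
        have := hαd i (Fin.last m) hi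
        omega
      have := aux_gop_iter_ne_zero hc N hq
      rw [← hcomp N q i] at this
      exact this (hrzero i)
    have hqlast : q (Fin.last m) = 0 := by
      apply Polynomial.funext
      intro z
      have hz := h z
      rw [Fin.sum_univ_castSucc] at hz
      have : ∀ i : Fin m, (q (Fin.castSucc i)).eval z *
          Complex.exp ((α (Fin.castSucc i)).eval z) = 0 := by
        intro i
        rw [hqzero (Fin.castSucc i) (Fin.castSucc_lt_last i).ne]
        simp
      rw [Finset.sum_eq_zero (fun i _ => this i), zero_add] at hz
      have := mul_eq_zero.mp hz
      rcases this with h' | h'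
      · simpa using h'
      · exact absurd h' (Complex.exp_ne_zero _)
    intro i
    rcases eq_or_ne i (Fin.last m) with h' | h'
    · rw [h']; exact hqlast
    · exact hqzero i h'

/-- `g` agrees, off a finite set, with the quotient of two polynomials, the
denominator being non-vanishing off that set. -/
def RatOff (g : ℂ → ℂ) : Prop :=
  ∃ A B : Polynomial ℂ, B ≠ 0 ∧ ∃ S : Set ℂ, S.Finite ∧
    ∀ z ∉ S, B.eval z ≠ 0 ∧ g z = A.eval z / B.eval z

lemma RatOff.of_isRat {q : ℂ → ℂ} (h : IsRat q) : RatOff q := by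
  obtain ⟨A, B, hB, hq⟩ := h
  exact ⟨A, B, hB, {z | B.eval z = 0}, B.finite_setOf_isRoot hB,
    fun z hz => ⟨hz, hq z hz⟩⟩

lemma RatOff.const (c : ℂ) : RatOff fun _ => c :=
  ⟨Polynomial.C c, 1, one_ne_zero, ∅, Set.finite_empty, fun z _ => by simp⟩

lemma RatOff.add {g h : ℂ → ℂ} (hg : RatOff g) (hh : RatOff h) :
    RatOff fun z => g z + h z := by
  obtain ⟨A₁, B₁, hB₁, S₁, hS₁, h₁⟩ := hg
  obtain ⟨A₂, B₂, hB₂, S₂, hS₂, h₂⟩ := hh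
  refine ⟨A₁ * B₂ + A₂ * B₁, B₁ * B₂, mul_ne_zero hB₁ hB₂, S₁ ∪ S₂, hS₁.union hS₂,
    fun z hz => ?_⟩
  obtain ⟨e₁, v₁⟩ := h₁ z fun h => hz (Set.mem_union_left _ h)
  obtain ⟨e₂, v₂⟩ := h₂ z fun h => hz (Set.mem_union_right _ h)
  refine ⟨by simp only [Polynomial.eval_mul]; exact mul_ne_zero e₁ e₂, ?_⟩
  simp only [v₁, v₂, Polynomial.eval_add, Polynomial.eval_mul]
  field_simp

lemma RatOff.mul {g h : ℂ → ℂ} (hg : RatOff g) (hh : RatOff h) :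
    RatOff fun z => g z * h z := by
  obtain ⟨A₁, B₁, hB₁, S₁, hS₁, h₁⟩ := hg
  obtain ⟨A₂, B₂, hB₂, S₂, hS₂, h₂⟩ := hh
  refine ⟨A₁ * A₂, B₁ * B₂, mul_ne_zero hB₁ hB₂, S₁ ∪ S₂, hS₁.union hS₂,
    fun z hz => ?_⟩
  obtain ⟨e₁, v₁⟩ := h₁ z fun h => hz (Set.mem_union_left _ h)
  obtain ⟨e₂, v₂⟩ := h₂ z fun h => hz (Set.mem_union_right _ h)
  refine ⟨by simp only [Polynomial.eval_mul]; exact mul_ne_zero e₁ e₂, ?_⟩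
  simp only [v₁, v₂, Polynomial.eval_mul]
  field_simp

lemma RatOff.pow {g : ℂ → ℂ} (hg : RatOff g) (n : ℕ) : RatOff fun z => g z ^ n := by
  induction n with
  | zero => simpa using RatOff.const 1
  | succ n ih => simpa [pow_succ] using ih.mul hg

lemma RatOff.finsetSum {ι : Type*} (s : Finset ι) (g : ι → ℂ → ℂ)
    (h : ∀ i ∈ s, RatOff (g i)) : RatOff fun z => ∑ i ∈ s, g i z := by
  induction s using Finset.cons_induction with
  | empty => simpa using RatOff.const 0
  | cons i s hi ih =>
    simp only [Finset.sum_cons]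
    exact (h i (Finset.mem_cons_self i s)).add
      (ih fun j hj => h j (Finset.mem_cons_of_mem hj))

lemma RatOff.finsetProd {ι : Type*} (s : Finset ι) (g : ι → ℂ → ℂ)
    (h : ∀ i ∈ s, RatOff (g i)) : RatOff fun z => ∏ i ∈ s, g i z := by
  induction s using Finset.cons_induction with
  | empty => simpa using RatOff.const 1
  | cons i s hi ih =>
    simp only [Finset.prod_cons]
    exact (h i (Finset.mem_cons_self i s)).mul
      (ih fun j hj => h j (Finset.mem_cons_of_mem hj))

lemma RatOff.deriv {g : ℂ → ℂ} (hg : RatOff g) : RatOff (deriv g) := by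
  obtain ⟨A, B, hB, S, hS, hgz⟩ := hg
  refine ⟨A.derivative * B - A * B.derivative, B * B, mul_ne_zero hB hB, S, hS,
    fun z hz => ?_⟩
  have hzB : B.eval z ≠ 0 := (hgz z hz).1
  refine ⟨by simp only [Polynomial.eval_mul]; exact mul_ne_zero hzB hzB, ?_⟩
  have hopen : IsOpen Sᶜ := hS.isClosed.isOpen_compl
  have hev : g =ᶠ[nhds z] fun w => A.eval w / B.eval w := by
    filter_upwards [hopen.mem_nhds hz] with w hw
    exact (hgz w hw).2
  rw [hev.deriv_eq]
  have hdiv := ((A.hasDerivAt z).fun_div (B.hasDerivAt z) hzB).deriv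
  rw [hdiv]
  simp only [Polynomial.eval_mul, Polynomial.eval_sub, pow_two]

lemma RatOff.iteratedDeriv {g : ℂ → ℂ} (hg : RatOff g) (n : ℕ) :
    RatOff (iteratedDeriv n g) := by
  induction n with
  | zero => simpa [iteratedDeriv_zero] using hg
  | succ n ih => rw [iteratedDeriv_succ]; exact ih.deriv

lemma RatOff.congr {g h : ℂ → ℂ} (hg : RatOff g) (S' : Set ℂ) (hS' : S'.Finite)
    (he : ∀ z ∉ S', h z = g z) : RatOff h := by
  obtain ⟨A, B, hB, S, hS, hgz⟩ := hg
  refine ⟨A, B, hB, S ∪ S', hS.union hS', fun z hz => ?_⟩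
  obtain ⟨e, v⟩ := hgz z fun h => hz (Set.mem_union_left _ h)
  exact ⟨e, by rw [he z fun h => hz (Set.mem_union_right _ h), v]⟩

theorem stmt_6 (a : ℂ) (n d k : ℕ) (hn : 2 ≤ n) (hk : 1 ≤ k)
    (p : Fin k → ℂ → ℂ) (hp : ∀ i, IsNZRat (p i))
    (α : Fin k → Polynomial ℂ) (hα : ∀ i, 0 < (α i).natDegree)
    (hαij : ∀ i j, i ≠ j → 1 ≤ ((α i) - (α j)).natDegree)
    (Q : (ℂ → ℂ) → ℂ → ℂ) (hQ : IsDiffPolyOp d Q) :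
    ∀ f : ℂ → ℂ, IsRat f →
      ¬ EqOffFinite (fun z => f z ^ n + a * f z ^ (n - 2) * deriv f z + Q f z)
        (fun z => ∑ i, p i z * Complex.exp ((α i).eval z)) := by
  intro f hf hEq
  obtain ⟨SE, hSE, hE⟩ := hEq
  have hfR : RatOff f := RatOff.of_isRat hf
  have hQf : RatOff (Q f) := by
    obtain ⟨m, L, aco, haR, -, SQ, hSQ, heq⟩ := hQ
    have hsum : RatOff (fun z => ∑ lam ∈ L, aco lam z *
        ∏ i : Fin (m + 1), (iteratedDeriv i.val f z) ^ lam i) := by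
      apply RatOff.finsetSum
      intro lam hlam
      exact (RatOff.of_isRat (haR lam hlam)).mul
        (RatOff.finsetProd Finset.univ _ fun i _ =>
          (hfR.iteratedDeriv i.val).pow (lam i))
    exact hsum.congr SQ hSQ (fun z hz => heq f z hz)
  have hLHS : RatOff (fun z => f z ^ n + a * f z ^ (n - 2) * deriv f z + Q f z) :=
    ((hfR.pow n).add (((RatOff.const a).mul (hfR.pow (n - 2))).mul hfR.deriv)).add hQf
  obtain ⟨A, B, hB, S0, hS0, h0⟩ := hLHS
  choose Ap Bp hAp hBp hval using hp
  set Sb : Set ℂ := (S0 ∪ SE) ∪ ⋃ i, {z | (Bp i).eval z = 0} with hSb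
  have hSbF : Sb.Finite :=
    ((hS0.union hSE).union
      (Set.finite_iUnion fun i => (Bp i).finite_setOf_isRoot (hBp i)))
  set Pc : Fin k → Polynomial ℂ :=
    fun i => Ap i * B * ∏ j ∈ Finset.univ.erase i, Bp j with hPc
  set P0 : Polynomial ℂ := A * ∏ j, Bp j with hP0
  set G : ℂ → ℂ := fun z => ∑ i : Fin (k + 1),
      ((Fin.snoc Pc (-P0) : Fin (k + 1) → Polynomial ℂ) i).eval z *
        Complex.exp (((Fin.snoc α 0 : Fin (k + 1) → Polynomial ℂ) i).eval z) with hG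
  have hG0 : ∀ z ∉ Sb, G z = 0 := by
    intro z hz
    have hz0 : z ∉ S0 := fun h => hz (Set.mem_union_left _ (Set.mem_union_left _ h))
    have hzE : z ∉ SE := fun h => hz (Set.mem_union_left _ (Set.mem_union_right _ h))
    have hBz : B.eval z ≠ 0 := (h0 z hz0).1
    have hBpz : ∀ i, (Bp i).eval z ≠ 0 := by
      intro i hzero
      exact hz (Set.mem_union_right _ (Set.mem_iUnion.mpr ⟨i, hzero⟩))
    have heq1 : A.eval z / B.eval z = ∑ i, p i z * Complex.exp ((α i).eval z) := by
      have h1 := (h0 z hz0).2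
      have h2 := hE z hzE
      simp only at h1 h2
      rw [← h1, h2]
    have hpv : ∀ i, p i z = (Ap i).eval z / (Bp i).eval z :=
      fun i => hval i z (hBpz i)
    have hPcz : ∀ i, (Pc i).eval z
        = ((Ap i).eval z / (Bp i).eval z) *
          (B.eval z * ∏ j, (Bp j).eval z) := by
      intro i
      have hme : (Bp i).eval z * ∏ j ∈ Finset.univ.erase i, (Bp j).eval z
          = ∏ j, (Bp j).eval z :=
        Finset.mul_prod_erase Finset.univ (fun j => (Bp j).eval z) (Finset.mem_univ i)
      rw [hPc]
      simp only [Polynomial.eval_mul, Polynomial.eval_prod]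
      rw [← hme]
      field_simp [hBpz i]
    have hsum : ∑ i, (Pc i).eval z * Complex.exp ((α i).eval z) = P0.eval z := by
      calc ∑ i, (Pc i).eval z * Complex.exp ((α i).eval z)
          = ∑ i, (p i z * Complex.exp ((α i).eval z)) *
              (B.eval z * ∏ j, (Bp j).eval z) := by
            refine Finset.sum_congr rfl fun i _ => ?_
            rw [hPcz i, hpv i]
            ring
        _ = (∑ i, p i z * Complex.exp ((α i).eval z)) *
              (B.eval z * ∏ j, (Bp j).eval z) := (Finset.sum_mul _ _ _).symm
        _ = (A.eval z / B.eval z) * (B.eval z * ∏ j, (Bp j).eval z) := by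
            rw [heq1]
        _ = A.eval z * ∏ j, (Bp j).eval z := by
            field_simp
        _ = P0.eval z := by rw [hP0, Polynomial.eval_mul, Polynomial.eval_prod]
    rw [hG]
    simp only [Fin.sum_univ_castSucc, Fin.snoc_castSucc, Fin.snoc_last,
      Polynomial.eval_neg, Polynomial.eval_zero, Complex.exp_zero, mul_one]
    rw [hsum]
    ring
  have hGcont : Continuous G := by
    rw [hG]
    exact continuous_finset_sum _ fun i _ =>
      (Polynomial.continuous _).mul (Complex.continuous_exp.comp (Polynomial.continuous _))
  have hdense : Dense Sbᶜ := hSbF.countable.dense_compl ℂ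
  have hGall : ∀ z, G z = 0 := by
    have hfn : G = fun _ => (0 : ℂ) :=
      Continuous.ext_on hdense hGcont continuous_const (fun x hx => hG0 x hx)
    exact fun z => congrFun hfn z
  have key : ∀ i j : Fin (k + 1), i ≠ j →
      0 < ((Fin.snoc α 0 : Fin (k + 1) → Polynomial ℂ) i -
        (Fin.snoc α 0 : Fin (k + 1) → Polynomial ℂ) j).natDegree := by
    intro i j hij
    rcases eq_or_ne i (Fin.last k) with rfl | hi
    · obtain ⟨j', rfl⟩ := Fin.exists_castSucc_eq.mpr (Ne.symm hij)
      simp only [Fin.snoc_last, Fin.snoc_castSucc, zero_sub, Polynomial.natDegree_neg]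
      exact hα j'
    · obtain ⟨i', rfl⟩ := Fin.exists_castSucc_eq.mpr hi
      rcases eq_or_ne j (Fin.last k) with rfl | hj
      · simp only [Fin.snoc_last, Fin.snoc_castSucc, sub_zero]
        exact hα i'
      · obtain ⟨j', rfl⟩ := Fin.exists_castSucc_eq.mpr hj
        simp only [Fin.snoc_castSucc]
        exact hαij i' j' fun h => hij (by rw [h])
  have hind := aux_expPolyIndep (k + 1) (Fin.snoc Pc (-P0)) (Fin.snoc α 0) key hGall
  have hcon := hind (Fin.castSucc ⟨0, hk⟩)
  rw [Fin.snoc_castSucc] at hcon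
  have hne : Pc ⟨0, hk⟩ ≠ 0 := by
    rw [hPc]
    exact mul_ne_zero (mul_ne_zero (hAp ⟨0, hk⟩) hB)
      (Finset.prod_ne_zero_iff.mpr fun j _ => hBp j)
  exact hne hcon
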